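/- The graph C(D̃₅) with points {0,...,5} and lines {0,2},{1,2},{2,3},{3,4},{3,5} has exactly 23 geometric hyperplanes. -/

import Mathlib

open Finset

/-- A geometric hyperplane of a graph (point-line structure with lines of size two):
a proper subset `H` of the points such that every line either lies fully in `H`
or meets `H` in exactly one point. -/
def IsHyp {n : ℕ} (E : Finset (Finset (Fin n))) (H : Finset (Fin n)) : Prop :=
  H ≠ Finset.univ ∧ ∀ e ∈ E, e ⊆ H ∨ (e ∩ H).card = 1

/-- A three-point Veldkamp line: an unordered triple of distinct geometric hyperplanes
whose third member is the complement of the symmetric difference of the other two. -/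
def IsVLine {n : ℕ} (E : Finset (Finset (Fin n))) (T : Finset (Finset (Fin n))) : Prop :=
  ∃ H1 H2 H3 : Finset (Fin n), IsHyp E H1 ∧ IsHyp E H2 ∧ IsHyp E H3 ∧
    H1 ≠ H2 ∧ H1 ≠ H3 ∧ H2 ≠ H3 ∧ H3 = (symmDiff H1 H2)ᶜ ∧ T = {H1, H2, H3}
def edgesD5 : Finset (Finset (Fin 6)) := {{0,2},{1,2},{2,3},{3,4},{3,5}}

instance {n : ℕ} (E : Finset (Finset (Fin n))) : DecidablePred (IsHyp E) :=
  fun H => by unfold IsHyp; infer_instance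

theorem stmt7 : {H : Finset (Fin 6) | IsHyp edgesD5 H}.ncard = 23 := by
  have h : {H : Finset (Fin 6) | IsHyp edgesD5 H} =
      ↑(Finset.univ.filter (fun H => IsHyp edgesD5 H)) := by
    ext H; simp only [Set.mem_setOf_eq, Finset.mem_coe, Finset.mem_filter, Finset.mem_univ, true_and]
  rw [h, Set.ncard_coe_finset]
  decide
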